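/- For every real δ > 0 there exist constants c₁ > 0, c₃ > 0, a positive integer c₂, and a positive integer N such that the following holds. If n > N and A ⊆ [1, n] ∩ ℤ with |A| ≥ δn, then there exists a subset A' ⊆ A with |A'| ≥ c₁·|A| such that for at least c₃·|A|² pairs of integers (i, j) with 0 ≤ i < j < n/c₂ one has |A' ∩ [i·c₂, j·c₂)| = j − i. -/

import Mathlib

open Finset

/-- Pick (at most) `m` elements of `s`. -/
def gspick (s : Finset ℤ) (m : ℕ) : Finset ℤ := ((s.sort (· ≤ ·)).take m).toFinset

lemma gspick_subset (s : Finset ℤ) (m : ℕ) : gspick s m ⊆ s := by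
  intro x hx
  rw [gspick, List.mem_toFinset] at hx
  exact (Finset.mem_sort _).mp ((List.take_sublist m _).subset hx)

lemma card_gspick (s : Finset ℤ) (m : ℕ) : (gspick s m).card = min m s.card := by
  rw [gspick, List.card_toFinset,
    ((s.sort_nodup (· ≤ ·)).sublist (List.take_sublist m _)).dedup,
    List.length_take, Finset.length_sort]

/-- The `k`-th block of `A`. -/
noncomputable def gsblk (A : Finset ℤ) (c₂ k : ℕ) : Finset ℤ :=
  A ∩ Finset.Ico ((k * c₂ : ℕ) : ℤ) (((k + 1) * c₂ : ℕ) : ℤ)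

/-- Greedy deficit. -/
noncomputable def gsD (A : Finset ℤ) (c₂ : ℕ) : ℕ → ℕ
  | 0 => 0
  | k + 1 => (gsD A c₂ k + 1) - min (gsD A c₂ k + 1) (gsblk A c₂ k).card

/-- Number of elements taken from block `k`. -/
noncomputable def gst (A : Finset ℤ) (c₂ k : ℕ) : ℕ := min (gsD A c₂ k + 1) (gsblk A c₂ k).card

/-- Elements selected from block `k`. -/
noncomputable def gssel (A : Finset ℤ) (c₂ k : ℕ) : Finset ℤ := gspick (gsblk A c₂ k) (gsD A c₂ k + 1)

lemma card_gssel (A : Finset ℤ) (c₂ k : ℕ) : (gssel A c₂ k).card = gst A c₂ k :=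
  card_gspick _ _

lemma gssel_subset_blk (A : Finset ℤ) (c₂ k : ℕ) : gssel A c₂ k ⊆ gsblk A c₂ k :=
  gspick_subset _ _

lemma gst_le (A : Finset ℤ) (c₂ k : ℕ) : gst A c₂ k ≤ gsD A c₂ k + 1 := min_le_left _ _

lemma gst_le_card (A : Finset ℤ) (c₂ k : ℕ) : gst A c₂ k ≤ (gsblk A c₂ k).card :=
  min_le_right _ _

lemma gsD_succ (A : Finset ℤ) (c₂ k : ℕ) :
    gsD A c₂ (k + 1) + gst A c₂ k = gsD A c₂ k + 1 := by
  have := gst_le A c₂ k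
  simp only [gsD, gst] at *
  omega

lemma gssum (A : Finset ℤ) (c₂ : ℕ) : ∀ m, (∑ k ∈ range m, gst A c₂ k) + gsD A c₂ m = m := by
  intro m
  induction m with
  | zero => simp [gsD]
  | succ m ih =>
    rw [Finset.sum_range_succ]
    have := gsD_succ A c₂ m
    omega

lemma gsblk_card_le (A : Finset ℤ) (c₂ k : ℕ) : (gsblk A c₂ k).card ≤ c₂ := by
  refine le_trans (Finset.card_le_card (Finset.inter_subset_right)) ?_
  rw [Int.card_Ico]
  have h : ((k + 1) * c₂ : ℕ) = k * c₂ + c₂ := by ring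
  rw [h]
  push_cast
  omega

lemma gsblk_mem_range {A : Finset ℤ} {c₂ k : ℕ} {x : ℤ} (hx : x ∈ gsblk A c₂ k) :
    ((k * c₂ : ℕ) : ℤ) ≤ x ∧ x < (((k + 1) * c₂ : ℕ) : ℤ) := by
  have := (Finset.mem_inter.mp hx).2
  rw [Finset.mem_Ico] at this
  exact this

lemma gs_mul_cast_le {k l : ℕ} (c₂ : ℕ) (h : k ≤ l) :
    ((k * c₂ : ℕ) : ℤ) ≤ ((l * c₂ : ℕ) : ℤ) := by
  exact_mod_cast Nat.mul_le_mul_right _ h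

lemma gsblk_disjoint (A : Finset ℤ) (c₂ : ℕ) {k l : ℕ} (h : k ≠ l) :
    Disjoint (gsblk A c₂ k) (gsblk A c₂ l) := by
  rw [Finset.disjoint_left]
  intro x hk hl
  obtain ⟨h1, h2⟩ := gsblk_mem_range hk
  obtain ⟨h3, h4⟩ := gsblk_mem_range hl
  rcases Nat.lt_or_ge k l with hkl | hkl
  · have := gs_mul_cast_le (k := k + 1) (l := l) c₂ (by omega)
    omega
  · have := gs_mul_cast_le (k := l + 1) (l := k) c₂ (by omega)
    omega

lemma gs_exists_block (c₂ : ℕ) : ∀ (m : ℕ) (x : ℤ), 0 ≤ x → x < ((m * c₂ : ℕ) : ℤ) →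
    ∃ k, k < m ∧ ((k * c₂ : ℕ) : ℤ) ≤ x ∧ x < (((k + 1) * c₂ : ℕ) : ℤ) := by
  intro m
  induction m with
  | zero => intro x h0 hx; simp at hx; omega
  | succ m ih =>
    intro x h0 hx
    rcases lt_or_ge x ((m * c₂ : ℕ) : ℤ) with h | h
    · obtain ⟨k, hk, h1, h2⟩ := ih x h0 h
      exact ⟨k, by omega, h1, h2⟩
    · exact ⟨m, by omega, h, hx⟩

lemma gscover (A : Finset ℤ) (c₂ : ℕ) (n m : ℕ) (hA : A ⊆ Finset.Icc 1 (n : ℤ)) :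
    A.card ≤ (∑ k ∈ range m, (gsblk A c₂ k).card)
      + (Finset.Icc ((m * c₂ : ℕ) : ℤ) (n : ℤ)).card := by
  have hsub : A ⊆ ((range m).biUnion (gsblk A c₂))
      ∪ (Finset.Icc ((m * c₂ : ℕ) : ℤ) (n : ℤ)) := by
    intro x hx
    have hx1 : 1 ≤ x ∧ x ≤ (n : ℤ) := Finset.mem_Icc.mp (hA hx)
    rcases lt_or_ge x ((m * c₂ : ℕ) : ℤ) with hlt | hge
    · refine Finset.mem_union_left _ ?_
      rw [Finset.mem_biUnion]
      obtain ⟨k, hk, h1, h2⟩ := gs_exists_block c₂ m x (by omega) hlt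
      exact ⟨k, Finset.mem_range.mpr hk,
        Finset.mem_inter.mpr ⟨hx, Finset.mem_Ico.mpr ⟨h1, h2⟩⟩⟩
    · exact Finset.mem_union_right _ (Finset.mem_Icc.mpr ⟨hge, hx1.2⟩)
  calc A.card ≤ _ := Finset.card_le_card hsub
    _ ≤ ((range m).biUnion (gsblk A c₂)).card
        + (Finset.Icc ((m * c₂ : ℕ) : ℤ) (n : ℤ)).card := Finset.card_union_le _ _
    _ ≤ _ := by
        gcongr
        exact Finset.card_biUnion_le

lemma gs_tail_card (c₂ n m : ℕ) (h : m * c₂ ≤ n) :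
    (Finset.Icc ((m * c₂ : ℕ) : ℤ) (n : ℤ)).card = n + 1 - m * c₂ := by
  rw [Int.card_Icc]
  push_cast
  omega

/-- The selected set. -/
noncomputable def gsA' (A : Finset ℤ) (c₂ K : ℕ) : Finset ℤ := (range K).biUnion (gssel A c₂)

lemma gssel_disjoint (A : Finset ℤ) (c₂ : ℕ) {k l : ℕ} (h : k ≠ l) :
    Disjoint (gssel A c₂ k) (gssel A c₂ l) :=
  (gsblk_disjoint A c₂ h).mono (gssel_subset_blk A c₂ k) (gssel_subset_blk A c₂ l)

lemma gsA'_subset (A : Finset ℤ) (c₂ K : ℕ) : gsA' A c₂ K ⊆ A := by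
  intro x hx
  obtain ⟨k, _, hk⟩ := Finset.mem_biUnion.mp hx
  exact Finset.mem_inter.mp (gssel_subset_blk A c₂ k hk) |>.1

lemma gsA'_card (A : Finset ℤ) (c₂ K : ℕ) :
    (gsA' A c₂ K).card = ∑ k ∈ range K, gst A c₂ k := by
  rw [gsA', Finset.card_biUnion]
  · exact Finset.sum_congr rfl fun k _ => card_gssel A c₂ k
  · intro k _ l _ h
    exact gssel_disjoint A c₂ h

lemma gsA'_inter (A : Finset ℤ) (c₂ K : ℕ) {i j : ℕ} (hjK : j ≤ K) :
    gsA' A c₂ K ∩ Finset.Ico ((i * c₂ : ℕ) : ℤ) ((j * c₂ : ℕ) : ℤ)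
      = (Finset.Ico i j).biUnion (gssel A c₂) := by
  ext x
  simp only [Finset.mem_inter, gsA', Finset.mem_biUnion, Finset.mem_range, Finset.mem_Ico]
  constructor
  · rintro ⟨⟨k, hkK, hk⟩, hx1, hx2⟩
    refine ⟨k, ⟨?_, ?_⟩, hk⟩
    · by_contra hik
      have := gs_mul_cast_le (k := k + 1) (l := i) c₂ (by omega)
      have := (gsblk_mem_range (gssel_subset_blk A c₂ k hk)).2
      omega
    · by_contra hjk
      have := gs_mul_cast_le (k := j) (l := k) c₂ (by omega)
      have := (gsblk_mem_range (gssel_subset_blk A c₂ k hk)).1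
      omega
  · rintro ⟨k, ⟨hik, hkj⟩, hk⟩
    obtain ⟨h1, h2⟩ := gsblk_mem_range (gssel_subset_blk A c₂ k hk)
    have hi := gs_mul_cast_le (k := i) (l := k) c₂ hik
    have hj := gs_mul_cast_le (k := k + 1) (l := j) c₂ (by omega)
    exact ⟨⟨k, by omega, hk⟩, by omega, by omega⟩

lemma gsA'_inter_card (A : Finset ℤ) (c₂ K : ℕ) {i j : ℕ} (hjK : j ≤ K) :
    (gsA' A c₂ K ∩ Finset.Ico ((i * c₂ : ℕ) : ℤ) ((j * c₂ : ℕ) : ℤ)).card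
      = ∑ k ∈ Finset.Ico i j, gst A c₂ k := by
  rw [gsA'_inter A c₂ K hjK, Finset.card_biUnion]
  · exact Finset.sum_congr rfl fun k _ => card_gssel A c₂ k
  · intro k _ l _ h
    exact gssel_disjoint A c₂ h

lemma gs_pairs_card (G : Finset ℕ) :
    2 * ((G ×ˢ G).filter fun p => p.1 < p.2).card + G.card = G.card * G.card := by
  classical
  have hsplit := Finset.card_filter_add_card_filter_not
    (s := G ×ˢ G) (p := fun p => p.1 < p.2)
  have hsplit2 := Finset.card_filter_add_card_filter_not
    (s := (G ×ˢ G).filter fun p => ¬ p.1 < p.2) (p := fun p => p.2 < p.1)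
  have hswap : (((G ×ˢ G).filter fun p => ¬ p.1 < p.2).filter fun p => p.2 < p.1).card
      = ((G ×ˢ G).filter fun p => p.1 < p.2).card := by
    apply Finset.card_bij (fun p _ => Prod.swap p)
    · rintro ⟨a, b⟩ hp
      simp only [Finset.mem_filter, Finset.mem_product] at *
      exact ⟨⟨hp.1.1.2, hp.1.1.1⟩, hp.2⟩
    · rintro ⟨a, b⟩ _ ⟨c, d⟩ _ h
      simp only [Prod.ext_iff, Prod.swap] at h ⊢
      omega
    · rintro ⟨a, b⟩ hp
      simp only [Finset.mem_filter, Finset.mem_product] at *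
      exact ⟨(b, a), ⟨⟨⟨hp.1.2, hp.1.1⟩, by omega⟩, hp.2⟩, rfl⟩
  have hdiag : (((G ×ˢ G).filter fun p => ¬ p.1 < p.2).filter fun p => ¬ p.2 < p.1).card
      = G.card := by
    apply Finset.card_bij (fun p _ => p.1)
    · rintro ⟨a, b⟩ hp
      simp only [Finset.mem_filter, Finset.mem_product] at hp
      exact hp.1.1.1
    · rintro ⟨a, b⟩ ha ⟨c, d⟩ hc h
      simp only [Finset.mem_filter, Finset.mem_product] at ha hc
      simp only [Prod.ext_iff] at h ⊢
      omega
    · intro a ha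
      exact ⟨(a, a), by simp [Finset.mem_filter, Finset.mem_product, ha], rfl⟩
  rw [Finset.card_product] at hsplit
  omega

/-- **Equidistribution on pairs of intervals.** For every `δ > 0` there are
`c₁, c₃ > 0` and positive integers `c₂, N` such that: if `n > N` and
`A ⊆ [1,n]` with `|A| ≥ δn`, then there is `A' ⊆ A` with `|A'| ≥ c₁|A|` such
that for at least `c₃|A|²` pairs of integers `0 ≤ i < j < n/c₂` one has
`|A' ∩ [i·c₂, j·c₂)| = j - i`. -/
theorem good_spacing_pairs :
    ∀ δ : ℝ, 0 < δ → ∃ (c₁ c₃ : ℝ) (c₂ N : ℕ), 0 < c₁ ∧ 0 < c₃ ∧ 0 < c₂ ∧ 0 < N ∧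
      ∀ n : ℕ, N < n → ∀ A : Finset ℤ, A ⊆ Finset.Icc 1 (n : ℤ) →
        δ * (n : ℝ) ≤ (A.card : ℝ) →
        ∃ A' ⊆ A, c₁ * (A.card : ℝ) ≤ (A'.card : ℝ) ∧
          c₃ * (A.card : ℝ) ^ 2 ≤
            ((((Finset.range (n + 1)) ×ˢ (Finset.range (n + 1))).filter
              (fun p : ℕ × ℕ => p.1 < p.2 ∧ (p.2 : ℝ) < (n : ℝ) / (c₂ : ℝ) ∧
                (A' ∩ Finset.Ico ((p.1 * c₂ : ℕ) : ℤ) ((p.2 * c₂ : ℕ) : ℤ)).card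
                  = p.2 - p.1)).card : ℝ) := by
  intro δ hδ
  set c₂ : ℕ := max 1 ⌈(4 : ℝ) / δ⌉₊ with hc₂def
  have hc₂pos : 0 < c₂ := lt_of_lt_of_le Nat.one_pos (le_max_left _ _)
  have hc₂ge : (4 : ℝ) / δ ≤ (c₂ : ℝ) := by
    calc (4 : ℝ) / δ ≤ (⌈(4 : ℝ) / δ⌉₊ : ℝ) := Nat.le_ceil _
      _ ≤ (c₂ : ℝ) := by exact_mod_cast Nat.le_max_right 1 _
  set N : ℕ := c₂ * ⌈(8 : ℝ) / δ⌉₊ + 4 * c₂ + 1 with hNdef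
  refine ⟨1 / (2 * (c₂ : ℝ)), δ ^ 2 / (16 * (c₂ : ℝ) ^ 2), c₂, N, ?_, ?_, hc₂pos, ?_, ?_⟩
  · positivity
  · positivity
  · omega
  intro n hn A hA hAcard
  have hc₂R : (0 : ℝ) < (c₂ : ℝ) := by exact_mod_cast hc₂pos
  have hnR : (0 : ℝ) < (n : ℝ) := by
    have : 0 < n := by omega
    exact_mod_cast this
  -- n is large: (n:ℝ) ≥ 8 c₂ / δ  and n ≥ 4 c₂ + 1
  have hn8 : 8 * (c₂ : ℝ) / δ ≤ (n : ℝ) := by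
    have h1 : (c₂ * ⌈(8 : ℝ) / δ⌉₊ : ℕ) ≤ n := by omega
    have h2 : (8 : ℝ) / δ ≤ (⌈(8 : ℝ) / δ⌉₊ : ℝ) := Nat.le_ceil _
    have h3 : ((c₂ : ℝ)) * ((⌈(8 : ℝ) / δ⌉₊ : ℕ) : ℝ) ≤ (n : ℝ) := by exact_mod_cast h1
    calc 8 * (c₂ : ℝ) / δ = (c₂ : ℝ) * ((8 : ℝ) / δ) := by ring
      _ ≤ (c₂ : ℝ) * (⌈(8 : ℝ) / δ⌉₊ : ℝ) := by
          exact mul_le_mul_of_nonneg_left h2 (le_of_lt hc₂R)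
      _ ≤ (n : ℝ) := h3
  set K : ℕ := n / c₂ with hKdef
  have hKc : K * c₂ ≤ n := Nat.div_mul_le_self n c₂
  have hKc2 : n < (K + 1) * c₂ := by
    have h1 := Nat.div_add_mod n c₂
    have h2 : n % c₂ < c₂ := Nat.mod_lt n hc₂pos
    have h3 : (K + 1) * c₂ = c₂ * (n / c₂) + c₂ := by rw [hKdef]; ring
    omega
  have hK4 : 4 ≤ K := by
    rw [hKdef, Nat.le_div_iff_mul_le hc₂pos]
    omega
  have hKn : K ≤ n := Nat.div_le_self n c₂
  have hAn : A.card ≤ n := by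
    have := Finset.card_le_card hA
    rwa [Int.card_Icc, show ((n : ℤ) + 1 - 1).toNat = n by omega] at this
  -- abbreviations
  set M : ℕ := K - 1 with hMdef
  have hKM : K = M + 1 := by omega
  set G : Finset ℕ := (range K).filter (fun k => gsD A c₂ k = 0) with hGdef
  set GoodK : Finset ℕ :=
    (range M).filter (fun k => gst A c₂ k < (gsblk A c₂ k).card) with hGoodKdef
  -- good blocks give zero deficit at next index
  have hgood : ∀ k ∈ GoodK, gsD A c₂ (k + 1) = 0 := by
    intro k hk
    rw [hGoodKdef, Finset.mem_filter] at hk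
    have h1 := gsD_succ A c₂ k
    have h2 := hk.2
    simp only [gst] at h1 h2 ⊢
    omega
  have hGoodK_le : GoodK.card ≤ G.card := by
    apply Finset.card_le_card_of_injOn (fun k => k + 1)
    · intro k hk
      have hk' := hk
      rw [hGoodKdef, Finset.mem_coe, Finset.mem_filter, Finset.mem_range] at hk'
      rw [Finset.mem_coe, hGdef, Finset.mem_filter, Finset.mem_range]
      exact ⟨show k + 1 < K by omega, hgood k hk⟩
    · intro a _ b _ h
      simpa using h
  -- counting: A.card ≤ M + c₂ * GoodK.card + 2*c₂
  have hcount : A.card ≤ M + c₂ * GoodK.card + 2 * c₂ := by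
    have hMc : M * c₂ ≤ n := by
      calc M * c₂ ≤ K * c₂ := Nat.mul_le_mul_right _ (by omega)
        _ ≤ n := hKc
    have c1 : A.card ≤ (∑ k ∈ range M, (gsblk A c₂ k).card) + (n + 1 - M * c₂) := by
      have := gscover A c₂ n M hA
      rwa [gs_tail_card c₂ n M hMc] at this
    have c2 : n + 1 - M * c₂ ≤ 2 * c₂ := by
      have : (K + 1) * c₂ = M * c₂ + 2 * c₂ := by rw [hKM]; ring
      omega
    have c3 : (∑ k ∈ range M, (gsblk A c₂ k).card)
        ≤ (∑ k ∈ range M, gst A c₂ k) + c₂ * GoodK.card := by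
      have hpt : ∀ k ∈ range M, (gsblk A c₂ k).card
          ≤ gst A c₂ k + (if gst A c₂ k < (gsblk A c₂ k).card then c₂ else 0) := by
        intro k _
        have h1 := gsblk_card_le A c₂ k
        have h2 := gst_le_card A c₂ k
        split <;> omega
      calc (∑ k ∈ range M, (gsblk A c₂ k).card)
          ≤ ∑ k ∈ range M, (gst A c₂ k
              + (if gst A c₂ k < (gsblk A c₂ k).card then c₂ else 0)) :=
            Finset.sum_le_sum hpt
        _ = (∑ k ∈ range M, gst A c₂ k)
            + ∑ k ∈ range M, (if gst A c₂ k < (gsblk A c₂ k).card then c₂ else 0) :=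
            Finset.sum_add_distrib
        _ = (∑ k ∈ range M, gst A c₂ k) + c₂ * GoodK.card := by
            rw [← Finset.sum_filter, ← hGoodKdef, Finset.sum_const, smul_eq_mul, mul_comm]
    have c4 : (∑ k ∈ range M, gst A c₂ k) ≤ M := by
      have := gssum A c₂ M
      omega
    omega
  have hcountG : A.card ≤ K + c₂ * G.card + 2 * c₂ := by
    have := Nat.mul_le_mul_left c₂ hGoodK_le
    omega
  -- the selected set
  refine ⟨gsA' A c₂ K, gsA'_subset A c₂ K, ?_, ?_⟩
  · -- c₁ bound
    have e1 : A.card ≤ c₂ * (gsA' A c₂ K).card + c₂ := by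
      have c1 : A.card ≤ (∑ k ∈ range K, (gsblk A c₂ k).card) + (n + 1 - K * c₂) := by
        have := gscover A c₂ n K hA
        rwa [gs_tail_card c₂ n K hKc] at this
      have c2 : n + 1 - K * c₂ ≤ c₂ := by
        have : (K + 1) * c₂ = K * c₂ + c₂ := by ring
        omega
      have c3 : (∑ k ∈ range K, (gsblk A c₂ k).card) ≤ c₂ * ∑ k ∈ range K, gst A c₂ k := by
        rw [Finset.mul_sum]
        apply Finset.sum_le_sum
        intro k _
        have h1 := gsblk_card_le A c₂ k
        rcases Nat.eq_zero_or_pos (gsblk A c₂ k).card with h | h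
        · omega
        · have ht : 1 ≤ gst A c₂ k := by
            simp only [gst]; omega
          calc (gsblk A c₂ k).card ≤ c₂ := h1
            _ = c₂ * 1 := by ring
            _ ≤ c₂ * gst A c₂ k := Nat.mul_le_mul_left _ ht
      rw [gsA'_card]
      omega
    -- now real arithmetic
    have e1R : (A.card : ℝ) ≤ (c₂ : ℝ) * ((gsA' A c₂ K).card : ℝ) + (c₂ : ℝ) := by
      exact_mod_cast e1
    have hA8 : 8 * (c₂ : ℝ) ≤ (A.card : ℝ) := by
      have : 8 * (c₂ : ℝ) ≤ δ * (n : ℝ) := by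
        rw [div_le_iff₀ hδ] at hn8
        linarith [hn8]
      linarith
    rw [div_mul_eq_mul_div, div_le_iff₀ (by positivity)]
    linarith only [e1R, hA8, hc₂R]
  · -- c₃ bound
    set P : Finset (ℕ × ℕ) := (G ×ˢ G).filter (fun p => p.1 < p.2) with hPdef
    have hPsub : P ⊆ (((Finset.range (n + 1)) ×ˢ (Finset.range (n + 1))).filter
        (fun p : ℕ × ℕ => p.1 < p.2 ∧ (p.2 : ℝ) < (n : ℝ) / (c₂ : ℝ) ∧
          (gsA' A c₂ K ∩ Finset.Ico ((p.1 * c₂ : ℕ) : ℤ) ((p.2 * c₂ : ℕ) : ℤ)).card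
            = p.2 - p.1)) := by
      rintro ⟨i, j⟩ hp
      rw [hPdef, Finset.mem_filter, Finset.mem_product] at hp
      obtain ⟨⟨hiG, hjG⟩, hij'⟩ := hp
      have hij : i < j := hij'
      rw [hGdef, Finset.mem_filter, Finset.mem_range] at hiG hjG
      refine Finset.mem_filter.mpr ⟨Finset.mem_product.mpr
        ⟨Finset.mem_range.mpr (by omega), Finset.mem_range.mpr (by omega)⟩, ?_⟩
      show i < j ∧ (j : ℝ) < (n : ℝ) / (c₂ : ℝ) ∧
        (gsA' A c₂ K ∩ Finset.Ico ((i * c₂ : ℕ) : ℤ) ((j * c₂ : ℕ) : ℤ)).card = j - i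
      refine ⟨hij, ?_, ?_⟩
      · -- (j : ℝ) < n / c₂
        rw [lt_div_iff₀ hc₂R]
        have h1 : (j + 1) * c₂ ≤ n := by
          calc (j + 1) * c₂ ≤ K * c₂ := Nat.mul_le_mul_right _ (by omega)
            _ ≤ n := hKc
        have h2 : ((j + 1) * c₂ : ℝ) ≤ (n : ℝ) := by exact_mod_cast h1
        push_cast at h2
        linarith only [h2, hc₂R]
      · -- cardinality
        have hjb : j ≤ K := by omega
        rw [gsA'_inter_card A c₂ K hjb]
        have hsum : (∑ k ∈ range i, gst A c₂ k) + (∑ k ∈ Finset.Ico i j, gst A c₂ k)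
            = ∑ k ∈ range j, gst A c₂ k := by
          rw [Finset.range_eq_Ico, Finset.range_eq_Ico]
          exact Finset.sum_Ico_consecutive _ (Nat.zero_le i) (le_of_lt hij)
        have h1 := gssum A c₂ i
        have h2 := gssum A c₂ j
        rw [hiG.2] at h1
        rw [hjG.2] at h2
        omega
    have hPcard := gs_pairs_card G
    have htarget : P.card ≤ (((Finset.range (n + 1)) ×ˢ (Finset.range (n + 1))).filter
        (fun p : ℕ × ℕ => p.1 < p.2 ∧ (p.2 : ℝ) < (n : ℝ) / (c₂ : ℝ) ∧
          (gsA' A c₂ K ∩ Finset.Ico ((p.1 * c₂ : ℕ) : ℤ) ((p.2 * c₂ : ℕ) : ℤ)).card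
            = p.2 - p.1)).card := Finset.card_le_card hPsub
    -- real bounds on G.card
    have hKR : (K : ℝ) * (c₂ : ℝ) ≤ (n : ℝ) := by exact_mod_cast hKc
    have hcG : (A.card : ℝ) ≤ (K : ℝ) + (c₂ : ℝ) * (G.card : ℝ) + 2 * (c₂ : ℝ) := by
      exact_mod_cast hcountG
    have hKle : (K : ℝ) ≤ δ * (n : ℝ) / 4 := by
      have h1 : (K : ℝ) ≤ (n : ℝ) / (c₂ : ℝ) := by
        rw [le_div_iff₀ hc₂R]; exact hKR
      have h2 : (n : ℝ) / (c₂ : ℝ) ≤ δ * (n : ℝ) / 4 := by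
        rw [div_le_div_iff₀ hc₂R (by norm_num)]
        have h4 : 4 ≤ (c₂ : ℝ) * δ := (div_le_iff₀ hδ).mp hc₂ge
        have h5 := mul_le_mul_of_nonneg_left h4 (le_of_lt hnR)
        linarith only [h5]
      linarith
    have h2c : 2 * (c₂ : ℝ) ≤ δ * (n : ℝ) / 4 := by
      rw [div_le_iff₀ hδ] at hn8
      linarith
    have hGlb' : δ * (n : ℝ) ≤ 2 * (c₂ : ℝ) * (G.card : ℝ) := by
      linarith only [hAcard, hcG, hKle, h2c]
    have hG2 : (2 : ℝ) ≤ (G.card : ℝ) := by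
      have h8 : (8 : ℝ) * (c₂ : ℝ) ≤ δ * (n : ℝ) := by
        rw [div_le_iff₀ hδ] at hn8
        linarith
      have h10 : (2 * (c₂ : ℝ)) * 4 ≤ (2 * (c₂ : ℝ)) * (G.card : ℝ) := by
        linarith only [h8, hGlb']
      have h11 := le_of_mul_le_mul_left h10 (by positivity)
      linarith only [h11]
    have hPR : ((G.card : ℝ) * (G.card : ℝ) - (G.card : ℝ)) = 2 * (P.card : ℝ) := by
      have h := hPcard
      have h2 := congrArg (fun x : ℕ => (x : ℝ)) h
      push_cast at h2
      linarith
    have s2 : (G.card : ℝ) ^ 2 ≤ 4 * (P.card : ℝ) := by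
      have hm : 2 * (G.card : ℝ) ≤ (G.card : ℝ) * (G.card : ℝ) :=
        mul_le_mul_of_nonneg_right hG2 (Nat.cast_nonneg _)
      linarith only [hPR, hm]
    have hAn' : (A.card : ℝ) ≤ (n : ℝ) := by exact_mod_cast hAn
    have t1 : δ * (A.card : ℝ) ≤ 2 * (c₂ : ℝ) * (G.card : ℝ) := by
      have := mul_le_mul_of_nonneg_left hAn' (le_of_lt hδ)
      linarith
    have s1 : δ ^ 2 * (A.card : ℝ) ^ 2 ≤ 4 * (c₂ : ℝ) ^ 2 * (G.card : ℝ) ^ 2 := by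
      have h0 : 0 ≤ δ * (A.card : ℝ) := mul_nonneg (le_of_lt hδ) (Nat.cast_nonneg _)
      have := mul_self_le_mul_self h0 t1
      linarith only [this]
    have s3 : (P.card : ℝ) ≤ ((((Finset.range (n + 1)) ×ˢ (Finset.range (n + 1))).filter
        (fun p : ℕ × ℕ => p.1 < p.2 ∧ (p.2 : ℝ) < (n : ℝ) / (c₂ : ℝ) ∧
          (gsA' A c₂ K ∩ Finset.Ico ((p.1 * c₂ : ℕ) : ℤ) ((p.2 * c₂ : ℕ) : ℤ)).card
            = p.2 - p.1)).card : ℝ) := Nat.cast_le.mpr htarget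
    rw [div_mul_eq_mul_div, div_le_iff₀ (by positivity)]
    have s2' : 4 * (c₂ : ℝ) ^ 2 * (G.card : ℝ) ^ 2
        ≤ 4 * (c₂ : ℝ) ^ 2 * (4 * (P.card : ℝ)) :=
      mul_le_mul_of_nonneg_left s2 (by positivity)
    have s3' : 16 * (c₂ : ℝ) ^ 2 * (P.card : ℝ) ≤ 16 * (c₂ : ℝ) ^ 2 * _ :=
      mul_le_mul_of_nonneg_left s3 (by positivity)
    linarith only [s1, s2', s3']
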